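/- arXiv:1911.00995 — 4 statements merged into one kernel-verified Lean document; each statement's English description precedes it below -/
import Mathlib

section
/- There is no constant k such that d^{MH}_2(S,R) ≤ k(d^{MH}_2(S,T) + d^{MH}_2(T,R)) for all finite nonempty subsets S, T, R of every metric space. Concretely: for every k > 0 there exist finite nonempty subsets S, T, R of the real line with the standard metric such that d^{MH}_2(S,R) > k(d^{MH}_2(S,T) + d^{MH}_2(T,R)). -/
open Finset Metric

noncomputable def dMH2 (S T : Finset ℝ) : ℝ :=
  (∑ s ∈ S, infDist s (T : Set ℝ)) + (∑ t ∈ T, infDist t (S : Set ℝ))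

theorem mh2_no_triangle_constant :
    ∀ k : ℝ, 0 < k → ∃ (S T R : Finset ℝ), S.Nonempty ∧ T.Nonempty ∧ R.Nonempty ∧
      dMH2 S R > k * (dMH2 S T + dMH2 T R) := by
  intro k hk
  obtain ⟨n, hn⟩ := exists_nat_gt (6 * k + 2)
  have hn2 : 2 ≤ n := by
    have : (2:ℝ) < n := by nlinarith
    exact_mod_cast this.le
  have hnpos : (0:ℝ) < n := by positivity
  set f : ℕ → ℝ := fun i => (i:ℝ) / (n^2) with hf
  have hfinj : Function.Injective f := by
    intro i j hij
    simp only [hf] at hij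
    rw [div_left_inj' (pow_pos hnpos 2).ne'] at hij
    exact_mod_cast hij
  set S : Finset ℝ := (range n).image f with hS
  have h0S : (0:ℝ) ∈ S := by
    refine mem_image.mpr ⟨0, ?_, by simp [hf]⟩
    simp; omega
  refine ⟨S, {0}, {1}, ⟨0, h0S⟩, ⟨0, mem_singleton_self 0⟩, ⟨1, mem_singleton_self 1⟩, ?_⟩
  have hterm1 : ∀ i ∈ range n, infDist (f i) ({(0:ℝ)} : Set ℝ) ≤ (1:ℝ) / n := by
    intro i hi
    rw [infDist_singleton, Real.dist_eq]
    have hi' : (i:ℝ) < n := by exact_mod_cast mem_range.mp hi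
    simp only [hf, sub_zero]
    rw [abs_of_nonneg (by positivity), div_le_div_iff₀ (by positivity) hnpos]
    nlinarith
  have hA : (∑ s ∈ S, infDist s (({0} : Finset ℝ) : Set ℝ)) ≤ 1 := by
    rw [hS, sum_image (fun a _ b _ h => hfinj h)]
    push_cast [coe_singleton]
    calc ∑ i ∈ range n, infDist (f i) ({(0:ℝ)} : Set ℝ)
        ≤ ∑ _i ∈ range n, (1:ℝ) / n := Finset.sum_le_sum hterm1
      _ = 1 := by
          rw [Finset.sum_const, card_range, nsmul_eq_mul]
          field_simp
  have hB : infDist (0:ℝ) (S : Set ℝ) = 0 := infDist_zero_of_mem (by exact_mod_cast h0S)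
  have hST : dMH2 S {0} ≤ 1 := by
    unfold dMH2
    rw [sum_singleton, hB]
    simpa using hA
  have hTR : dMH2 {0} {1} = 2 := by
    unfold dMH2
    simp [infDist_singleton, Real.dist_eq]
    norm_num
  have hterm2 : ∀ i ∈ range n, (1:ℝ)/2 ≤ infDist (f i) ({(1:ℝ)} : Set ℝ) := by
    intro i hi
    rw [infDist_singleton, Real.dist_eq]
    have hi' : (i:ℝ) < n := by exact_mod_cast mem_range.mp hi
    have hfi : f i ≤ 1/2 := by
      rw [hf]
      rw [div_le_div_iff₀ (by positivity) (by norm_num)]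
      have h2n : (2:ℝ) ≤ n := by exact_mod_cast hn2
      nlinarith
    have : f i - 1 ≤ -(1/2) := by linarith
    calc (1:ℝ)/2 ≤ -(f i - 1) := by linarith
      _ ≤ |f i - 1| := neg_le_abs _
  have hSR : (n:ℝ)/2 ≤ dMH2 S {1} := by
    unfold dMH2
    have h1 : (n:ℝ)/2 ≤ ∑ s ∈ S, infDist s (({1} : Finset ℝ) : Set ℝ) := by
      rw [hS, sum_image (fun a _ b _ h => hfinj h)]
      push_cast [coe_singleton]
      calc (n:ℝ)/2 = ∑ _i ∈ range n, (1:ℝ)/2 := by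
            rw [Finset.sum_const, card_range, nsmul_eq_mul]; ring
        _ ≤ ∑ i ∈ range n, infDist (f i) ({(1:ℝ)} : Set ℝ) := Finset.sum_le_sum hterm2
    have h2 : (0:ℝ) ≤ ∑ t ∈ ({1}:Finset ℝ), infDist t (S : Set ℝ) := by
      apply Finset.sum_nonneg; intro t _; exact infDist_nonneg
    linarith
  have hSTnn : 0 ≤ dMH2 S {0} := by
    unfold dMH2
    have := Finset.sum_nonneg (fun s (_ : s ∈ S) => infDist_nonneg (x := s) (s := (({0}:Finset ℝ):Set ℝ)))
    have := Finset.sum_nonneg (fun t (_ : t ∈ ({0}:Finset ℝ)) => infDist_nonneg (x := t) (s := (S:Set ℝ)))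
    linarith
  have : k * (dMH2 S {0} + dMH2 {0} {1}) ≤ k * 3 := by
    apply mul_le_mul_of_nonneg_left _ hk.le
    rw [hTR]; linarith
  have hk3 : k * 3 < (n:ℝ)/2 := by nlinarith
  calc k * (dMH2 S {0} + dMH2 {0} {1}) ≤ k * 3 := this
    _ < (n:ℝ)/2 := hk3
    _ ≤ dMH2 S {1} := hSR
end

section
/- There is no constant k such that d^{MH}_1(S,R) ≤ k(d^{MH}_1(S,T) + d^{MH}_1(T,R)) for all finite nonempty subsets S, T, R of every metric space. Concretely: for every k > 0 there exist finite nonempty subsets S, T, R of ℝ such that d^{MH}_1(S,R) > k(d^{MH}_1(S,T) + d^{MH}_1(T,R)). -/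
open Finset Metric

noncomputable def dMH1 (S T : Finset ℝ) : ℝ :=
  max ((∑ s ∈ S, infDist s (T : Set ℝ)) / S.card) ((∑ t ∈ T, infDist t (S : Set ℝ)) / T.card)

theorem mh1_no_triangle_constant :
    ∀ k : ℝ, 0 < k → ∃ (S T R : Finset ℝ), S.Nonempty ∧ T.Nonempty ∧ R.Nonempty ∧
      dMH1 S R > k * (dMH1 S T + dMH1 T R) := by
  intro k hk
  set m : ℕ := ⌈6 * k⌉₊ + 1 with hm_def
  have hm0 : 0 < m := Nat.succ_pos _
  have hmR : (0:ℝ) < m := by exact_mod_cast hm0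
  have hk6 : 6 * k < (m:ℝ) := by
    have h1 : 6 * k ≤ (⌈6 * k⌉₊ : ℝ) := Nat.le_ceil _
    have : (m:ℝ) = (⌈6 * k⌉₊ : ℝ) + 1 := by push_cast [hm_def]; ring
    linarith
  set f : ℕ → ℝ := fun i => -(i:ℝ) / (m:ℝ)^2 with hf
  set Img : Finset ℝ := (Finset.range m).image f with hImg
  set S : Finset ℝ := {0} with hS
  set T : Finset ℝ := Img ∪ {1} with hT
  set R : Finset ℝ := {0, 1} with hR
  -- basic facts about Img
  have himg : ∀ x ∈ Img, dist x (0:ℝ) ≤ 1/(m:ℝ) ∧ x ≤ 0 := by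
    intro x hx
    rw [hImg, Finset.mem_image] at hx
    obtain ⟨i, hi, rfl⟩ := hx
    rw [Finset.mem_range] at hi
    have him : (i:ℝ) ≤ (m:ℝ) := by exact_mod_cast hi.le
    have hfi : f i = -(i:ℝ) / (m:ℝ)^2 := rfl
    constructor
    · rw [hfi, Real.dist_eq, sub_zero, abs_div, abs_neg,
        abs_of_nonneg (Nat.cast_nonneg i), abs_of_nonneg (by positivity : (0:ℝ) ≤ (m:ℝ)^2)]
      rw [div_le_div_iff₀ (by positivity) hmR]
      nlinarith
    · rw [hfi]
      have : (0:ℝ) ≤ (i:ℝ) := Nat.cast_nonneg i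
      have h2 : (0:ℝ) < (m:ℝ)^2 := by positivity
      apply div_nonpos_of_nonpos_of_nonneg <;> linarith
  have h0Img : (0:ℝ) ∈ Img := by
    rw [hImg, Finset.mem_image]
    exact ⟨0, Finset.mem_range.mpr hm0, by simp [hf]⟩
  have h1nImg : (1:ℝ) ∉ Img := by
    intro h
    have := (himg 1 h).2
    linarith
  have hdisj : Disjoint Img ({1} : Finset ℝ) := by
    simp [Finset.disjoint_singleton_right, h1nImg]
  have hcardImg : Img.card = m := by
    rw [hImg]
    rw [Finset.card_image_of_injective _ ?_, Finset.card_range]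
    intro a b hab
    simp only [hf] at hab
    have : (a:ℝ) = b := by
      field_simp at hab
      linarith
    exact_mod_cast this
  have hcardT : (m:ℝ) ≤ (T.card : ℝ) := by
    have : Img.card ≤ T.card := Finset.card_le_card (Finset.subset_union_left)
    rw [hcardImg] at this
    exact_mod_cast this
  have hcardTpos : (0:ℝ) < (T.card : ℝ) := lt_of_lt_of_le hmR hcardT
  have h0T : (0:ℝ) ∈ T := Finset.mem_union_left _ h0Img
  have h1T : (1:ℝ) ∈ T := Finset.mem_union_right _ (Finset.mem_singleton_self 1)
  -- lower bound on dMH1 S R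
  have hSR : (1:ℝ)/2 ≤ dMH1 S R := by
    have hsum : (∑ t ∈ R, infDist t (S : Set ℝ)) = 1 := by
      rw [hR, Finset.sum_pair (by norm_num : (0:ℝ) ≠ 1)]
      rw [hS]
      simp [Metric.infDist_singleton, Real.dist_eq]
    have hcardR : (R.card : ℝ) = 2 := by
      rw [hR]; norm_num
    have : (∑ t ∈ R, infDist t (S : Set ℝ)) / R.card = 1/2 := by
      rw [hsum, hcardR]
    calc (1:ℝ)/2 = (∑ t ∈ R, infDist t (S : Set ℝ)) / R.card := this.symm
      _ ≤ dMH1 S R := le_max_right _ _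
  -- upper bound on dMH1 S T
  have hsumImg : ∀ (A : Set ℝ), (0:ℝ) ∈ A →
      (∑ x ∈ Img, infDist x A) ≤ 1 := by
    intro A hA
    have h1 : ∀ x ∈ Img, infDist x A ≤ 1/(m:ℝ) := by
      intro x hx
      calc infDist x A ≤ dist x 0 := Metric.infDist_le_dist_of_mem hA
        _ ≤ 1/(m:ℝ) := (himg x hx).1
    calc (∑ x ∈ Img, infDist x A) ≤ Img.card • (1/(m:ℝ)) :=
          Finset.sum_le_card_nsmul _ _ _ h1
      _ = (m:ℝ) * (1/(m:ℝ)) := by rw [hcardImg, nsmul_eq_mul]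
      _ = 1 := by field_simp
  have hST : dMH1 S T ≤ 2/(m:ℝ) := by
    apply max_le
    · have : (∑ s ∈ S, infDist s (T : Set ℝ)) = 0 := by
        rw [hS, Finset.sum_singleton]
        exact Metric.infDist_zero_of_mem (by exact_mod_cast h0T)
      rw [this, zero_div]
      positivity
    · have hsum : (∑ t ∈ T, infDist t (S : Set ℝ)) ≤ 2 := by
        rw [hT, Finset.sum_union hdisj, Finset.sum_singleton]
        have h1d : infDist (1:ℝ) (S : Set ℝ) = 1 := by
          rw [hS]
          simp [Metric.infDist_singleton, Real.dist_eq]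
        have h0S : (0:ℝ) ∈ (S : Set ℝ) := by rw [hS]; simp
        have := hsumImg (S : Set ℝ) h0S
        linarith
      have hnn : (0:ℝ) ≤ ∑ t ∈ T, infDist t (S : Set ℝ) :=
        Finset.sum_nonneg fun _ _ => Metric.infDist_nonneg
      exact div_le_div₀ (by norm_num) hsum hmR hcardT
  -- upper bound on dMH1 T R
  have hTR : dMH1 T R ≤ 1/(m:ℝ) := by
    apply max_le
    · have hsum : (∑ t ∈ T, infDist t (R : Set ℝ)) ≤ 1 := by
        rw [hT, Finset.sum_union hdisj, Finset.sum_singleton]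
        have h1d : infDist (1:ℝ) (R : Set ℝ) = 0 :=
          Metric.infDist_zero_of_mem (by rw [hR]; simp)
        have h0R : (0:ℝ) ∈ (R : Set ℝ) := by rw [hR]; simp
        have := hsumImg (R : Set ℝ) h0R
        linarith
      exact div_le_div₀ (by norm_num) hsum hmR hcardT
    · have : (∑ t ∈ R, infDist t (T : Set ℝ)) = 0 := by
        rw [hR, Finset.sum_pair (by norm_num : (0:ℝ) ≠ 1)]
        rw [Metric.infDist_zero_of_mem (by exact_mod_cast h0T),
          Metric.infDist_zero_of_mem (by exact_mod_cast h1T)]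
        ring
      rw [this, zero_div]
      positivity
  refine ⟨S, T, R, ⟨0, by simp [hS]⟩, ⟨0, h0T⟩, ⟨0, by simp [hR]⟩, ?_⟩
  have hlt : k * (3 / (m:ℝ)) < 1/2 := by
    rw [mul_div_assoc', div_lt_iff₀ hmR]
    linarith
  calc k * (dMH1 S T + dMH1 T R) ≤ k * (2/(m:ℝ) + 1/(m:ℝ)) := by
        apply mul_le_mul_of_nonneg_left (add_le_add hST hTR) hk.le
    _ = k * (3/(m:ℝ)) := by ring
    _ < 1/2 := hlt
    _ ≤ dMH1 S R := hSR
end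

section
/- There is no constant k such that d^{MH}_3(S,R) ≤ k(d^{MH}_3(S,T) + d^{MH}_3(T,R)) for all finite nonempty subsets S, T, R of every metric space. Concretely: for every k > 0 there exist finite nonempty subsets S, T, R of ℝ such that d^{MH}_3(S,R) > k(d^{MH}_3(S,T) + d^{MH}_3(T,R)). -/
open Finset Metric

noncomputable def dMH3 (S T : Finset ℝ) : ℝ :=
  (1 / (S.card + T.card : ℝ)) *
    ((∑ s ∈ S, infDist s (T : Set ℝ)) + (∑ t ∈ T, infDist t (S : Set ℝ)))

lemma le_infDist_aux {x b : ℝ} {s : Set ℝ} (hb : 0 ≤ b) (hs : s.Nonempty)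
    (h : ∀ y ∈ s, b ≤ dist x y) : b ≤ Metric.infDist x s := by
  rw [Metric.infDist]
  have h1 : ENNReal.ofReal b ≤ Metric.infEDist x s := by
    rw [EMetric.le_infEdist]
    intro y hy
    rw [edist_dist]
    exact ENNReal.ofReal_le_ofReal (h y hy)
  have h2 : Metric.infEDist x s ≠ ⊤ := Metric.infEdist_ne_top hs
  calc b = (ENNReal.ofReal b).toReal := (ENNReal.toReal_ofReal hb).symm
    _ ≤ _ := ENNReal.toReal_mono h2 h1

theorem mh3_no_triangle_constant :
    ∀ k : ℝ, 0 < k → ∃ (S T R : Finset ℝ), S.Nonempty ∧ T.Nonempty ∧ R.Nonempty ∧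
      dMH3 S R > k * (dMH3 S T + dMH3 T R) := by
  intro k hk
  set n : ℕ := ⌈4 * k⌉₊ with hndef
  have hn1 : 1 ≤ n := Nat.one_le_ceil_iff.mpr (by linarith)
  have hnR : (1:ℝ) ≤ (n:ℝ) := by exact_mod_cast hn1
  set δ : ℝ := 1 / (n:ℝ)^2 with hδdef
  have hδpos : 0 < δ := by positivity
  have hfinj : Function.Injective (fun i : ℕ => -(δ * (i:ℝ))) := by
    intro i j h
    simp only [neg_inj, mul_eq_mul_left_iff] at h
    rcases h with h | h
    · exact_mod_cast h
    · exact absurd h (ne_of_gt hδpos)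
  have hginj : Function.Injective (fun i : ℕ => 1 + δ * (i:ℝ)) := by
    intro i j h
    simp only [add_right_inj, mul_eq_mul_left_iff] at h
    rcases h with h | h
    · exact_mod_cast h
    · exact absurd h (ne_of_gt hδpos)
  set S : Finset ℝ := (range n).image (fun i : ℕ => -(δ * (i:ℝ))) with hSdef
  set R : Finset ℝ := (range n).image (fun i : ℕ => 1 + δ * (i:ℝ)) with hRdef
  set T : Finset ℝ := ({0, 1} : Finset ℝ) with hTdef
  have hSne : S.Nonempty := (Finset.image_nonempty).mpr ⟨0, mem_range.mpr hn1⟩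
  have hRne : R.Nonempty := (Finset.image_nonempty).mpr ⟨0, mem_range.mpr hn1⟩
  have hTne : T.Nonempty := ⟨0, by simp [hTdef]⟩
  have hScard : S.card = n := by
    rw [hSdef, Finset.card_image_of_injective _ hfinj, card_range]
  have hRcard : R.card = n := by
    rw [hRdef, Finset.card_image_of_injective _ hginj, card_range]
  have hTcard : T.card = 2 := by simp [hTdef]
  have h0S : (0:ℝ) ∈ S := by
    rw [hSdef]; exact mem_image.mpr ⟨0, mem_range.mpr hn1, by norm_num⟩
  have h1R : (1:ℝ) ∈ R := by
    rw [hRdef]; exact mem_image.mpr ⟨0, mem_range.mpr hn1, by norm_num⟩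
  have h0T : (0:ℝ) ∈ T := by simp [hTdef]
  have h1T : (1:ℝ) ∈ T := by simp [hTdef]
  -- bound on sums of δ*i
  have hsumδ : ∑ i ∈ range n, δ * (i:ℝ) ≤ 1 := by
    have h1 : ∑ i ∈ range n, δ * (i:ℝ) = δ * ∑ i ∈ range n, (i:ℝ) := by
      rw [Finset.mul_sum]
    have h2 : ∑ i ∈ range n, (i:ℝ) ≤ (n:ℝ)^2 := by
      calc ∑ i ∈ range n, (i:ℝ) ≤ ∑ _i ∈ range n, (n:ℝ) := by
            apply Finset.sum_le_sum
            intro i hi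
            exact_mod_cast (mem_range.mp hi).le
        _ = (n:ℝ) * (n:ℝ) := by simp [mul_comm]
        _ = (n:ℝ)^2 := by ring
    rw [h1, hδdef]
    rw [div_mul_eq_mul_div, one_mul, div_le_one (by positivity)]
    exact h2
  ----------------------------------------------------------------
  -- Lower bound : dMH3 S R ≥ 1
  have hSR : 1 ≤ dMH3 S R := by
    have hs : ∀ s ∈ S, (1:ℝ) ≤ infDist s (R : Set ℝ) := by
      intro s hs
      obtain ⟨i, hi, rfl⟩ := mem_image.mp hs
      apply le_infDist_aux (by norm_num) ⟨1, by exact_mod_cast h1R⟩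
      intro y hy
      obtain ⟨j, hj, rfl⟩ := mem_image.mp (by exact_mod_cast hy)
      rw [Real.dist_eq]
      have hi0 : 0 ≤ δ * (i:ℝ) := by positivity
      have hj0 : 0 ≤ δ * (j:ℝ) := by positivity
      rw [abs_of_nonpos (by linarith)]
      linarith
    have hr : ∀ r ∈ R, (1:ℝ) ≤ infDist r (S : Set ℝ) := by
      intro r hr
      obtain ⟨i, hi, rfl⟩ := mem_image.mp hr
      apply le_infDist_aux (by norm_num) ⟨0, by exact_mod_cast h0S⟩
      intro y hy
      obtain ⟨j, hj, rfl⟩ := mem_image.mp (by exact_mod_cast hy)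
      rw [Real.dist_eq]
      have hi0 : 0 ≤ δ * (i:ℝ) := by positivity
      have hj0 : 0 ≤ δ * (j:ℝ) := by positivity
      rw [abs_of_nonneg (by linarith)]
      linarith
    have hsum1 : (n:ℝ) ≤ ∑ s ∈ S, infDist s (R : Set ℝ) := by
      calc (n:ℝ) = ∑ _s ∈ S, (1:ℝ) := by simp [hScard]
        _ ≤ _ := Finset.sum_le_sum hs
    have hsum2 : (n:ℝ) ≤ ∑ r ∈ R, infDist r (S : Set ℝ) := by
      calc (n:ℝ) = ∑ _r ∈ R, (1:ℝ) := by simp [hRcard]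
        _ ≤ _ := Finset.sum_le_sum hr
    rw [dMH3, hScard, hRcard]
    rw [one_div, inv_mul_eq_div, le_div_iff₀ (by positivity)]
    push_cast
    linarith
  ----------------------------------------------------------------
  -- Upper bound : dMH3 S T ≤ 2 / (n+2)
  have hST : dMH3 S T ≤ 2 / ((n:ℝ) + 2) := by
    have hs : ∑ s ∈ S, infDist s (T : Set ℝ) ≤ 1 := by
      calc ∑ s ∈ S, infDist s (T : Set ℝ)
          = ∑ i ∈ range n, infDist (-(δ * (i:ℝ))) (T : Set ℝ) :=
            Finset.sum_image (fun i _ j _ h => hfinj h)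
        _ ≤ ∑ i ∈ range n, δ * (i:ℝ) := by
            apply Finset.sum_le_sum
            intro i hi
            calc infDist (-(δ * (i:ℝ))) (T : Set ℝ) ≤ dist (-(δ * (i:ℝ))) 0 :=
                  infDist_le_dist_of_mem (by exact_mod_cast h0T)
              _ = δ * (i:ℝ) := by
                  rw [Real.dist_eq]
                  simp [abs_of_nonpos, mul_nonneg hδpos.le (Nat.cast_nonneg i)]
        _ ≤ 1 := hsumδ
    have ht : ∑ t ∈ T, infDist t (S : Set ℝ) ≤ 1 := by
      have h01 : (0:ℝ) ≠ 1 := by norm_num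
      rw [hTdef, Finset.sum_pair h01]
      have h1 : infDist (0:ℝ) (S : Set ℝ) ≤ 0 := by
        have := infDist_le_dist_of_mem (x := (0:ℝ)) (show (0:ℝ) ∈ (S : Set ℝ) by exact_mod_cast h0S)
        simpa using this
      have h2 : infDist (1:ℝ) (S : Set ℝ) ≤ 1 := by
        have := infDist_le_dist_of_mem (x := (1:ℝ)) (show (0:ℝ) ∈ (S : Set ℝ) by exact_mod_cast h0S)
        simpa [Real.dist_eq] using this
      linarith
    rw [dMH3, hScard, hTcard]
    rw [one_div, inv_mul_eq_div, div_le_div_iff₀ (by positivity) (by positivity)]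
    push_cast
    nlinarith [hs, ht]
  ----------------------------------------------------------------
  -- Upper bound : dMH3 T R ≤ 2 / (n+2)
  have hTR : dMH3 T R ≤ 2 / ((n:ℝ) + 2) := by
    have hr : ∑ r ∈ R, infDist r (T : Set ℝ) ≤ 1 := by
      calc ∑ r ∈ R, infDist r (T : Set ℝ)
          = ∑ i ∈ range n, infDist (1 + δ * (i:ℝ)) (T : Set ℝ) :=
            Finset.sum_image (fun i _ j _ h => hginj h)
        _ ≤ ∑ i ∈ range n, δ * (i:ℝ) := by
            apply Finset.sum_le_sum
            intro i hi
            calc infDist (1 + δ * (i:ℝ)) (T : Set ℝ) ≤ dist (1 + δ * (i:ℝ)) 1 :=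
                  infDist_le_dist_of_mem (by exact_mod_cast h1T)
              _ = δ * (i:ℝ) := by
                  rw [Real.dist_eq]
                  simp [abs_of_nonneg, mul_nonneg hδpos.le (Nat.cast_nonneg i)]
        _ ≤ 1 := hsumδ
    have ht : ∑ t ∈ T, infDist t (R : Set ℝ) ≤ 1 := by
      have h01 : (0:ℝ) ≠ 1 := by norm_num
      rw [hTdef, Finset.sum_pair h01]
      have h1 : infDist (0:ℝ) (R : Set ℝ) ≤ 1 := by
        have := infDist_le_dist_of_mem (x := (0:ℝ)) (show (1:ℝ) ∈ (R : Set ℝ) by exact_mod_cast h1R)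
        simpa [Real.dist_eq] using this
      have h2 : infDist (1:ℝ) (R : Set ℝ) ≤ 0 := by
        have := infDist_le_dist_of_mem (x := (1:ℝ)) (show (1:ℝ) ∈ (R : Set ℝ) by exact_mod_cast h1R)
        simpa using this
      linarith
    rw [dMH3, hTcard, hRcard]
    rw [one_div, inv_mul_eq_div, div_le_div_iff₀ (by positivity) (by positivity)]
    push_cast
    nlinarith [hr, ht]
  ----------------------------------------------------------------
  refine ⟨S, T, R, hSne, hTne, hRne, ?_⟩
  have hk4 : 4 * k ≤ (n:ℝ) := Nat.le_ceil _
  have hfin : k * (dMH3 S T + dMH3 T R) ≤ k * (2 / ((n:ℝ) + 2) + 2 / ((n:ℝ) + 2)) := by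
    apply mul_le_mul_of_nonneg_left (by linarith) hk.le
  have hlt : k * (2 / ((n:ℝ) + 2) + 2 / ((n:ℝ) + 2)) < 1 := by
    have heq : k * (2 / ((n:ℝ) + 2) + 2 / ((n:ℝ) + 2)) = (4 * k) / ((n:ℝ) + 2) := by
      ring
    rw [heq, div_lt_one (by positivity)]
    linarith
  calc k * (dMH3 S T + dMH3 T R) ≤ k * (2 / ((n:ℝ) + 2) + 2 / ((n:ℝ) + 2)) := hfin
    _ < 1 := hlt
    _ ≤ dMH3 S R := hSR
end

section
/- For every p > 0 and every k > 0, there exist finite nonempty subsets S, T, R of ℝ with the Euclidean metric such that d^p_{MJ}(S,R) > k(d^p_{MJ}(S,T) + d^p_{MJ}(T,R)). Hence the MJ_p semi-metrics fail the triangle inequality up to any constant. -/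
open Finset Metric

noncomputable def dMJ (p : ℝ) (S T : Finset ℝ) : ℝ :=
  ((∑ t ∈ T, infDist t (S : Set ℝ) ^ p) / (2 * T.card)
    + (∑ s ∈ S, infDist s (T : Set ℝ) ^ p) / (2 * S.card)) ^ (1 / p)

theorem mj_no_triangle_constant :
    ∀ p : ℝ, 0 < p → ∀ k : ℝ, 0 < k → ∃ (S T R : Finset ℝ),
      S.Nonempty ∧ T.Nonempty ∧ R.Nonempty ∧
      dMJ p S R > k * (dMJ p S T + dMJ p T R) := by
  intro p hp k hk
  have hp' : p ≠ 0 := hp.ne'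
  have h1p : 0 ≤ 1 / p := by positivity
  have hnn : ∀ (F : Finset ℝ) (G : Set ℝ), 0 ≤ ∑ t ∈ F, infDist t G ^ p := fun F G =>
    Finset.sum_nonneg (fun i _ => Real.rpow_nonneg Metric.infDist_nonneg _)
  obtain ⟨B, hB⟩ := exists_nat_gt (max (3 * k * (4 : ℝ) ^ (1 / p)) 1)
  have hB3k : 3 * k * (4 : ℝ) ^ (1 / p) < (B : ℝ) := lt_of_le_of_lt (le_max_left _ _) hB
  have hB1 : (1 : ℝ) < (B : ℝ) := lt_of_le_of_lt (le_max_right _ _) hB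
  obtain ⟨N, hN⟩ := exists_nat_gt ((B : ℝ) ^ p)
  have hBp0 : (0 : ℝ) < (B : ℝ) ^ p := Real.rpow_pos_of_pos (by linarith) p
  have hN0 : (0 : ℝ) < (N : ℝ) := lt_trans hBp0 hN
  set Cl : Finset ℝ := (Finset.range N).image (fun j : ℕ => (j : ℝ) / N) with hCl
  set S : Finset ℝ := {0} with hS
  set R : Finset ℝ := {1, (B : ℝ)} with hR
  set T : Finset ℝ := Cl ∪ R with hT
  -- basic facts
  have hClmem : ∀ x ∈ Cl, 0 ≤ x ∧ x < 1 := by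
    intro x hx
    simp only [hCl, Finset.mem_image, Finset.mem_range] at hx
    obtain ⟨j, hj, rfl⟩ := hx
    constructor
    · positivity
    · rw [div_lt_one hN0]
      exact_mod_cast hj
  have hdisj : Disjoint Cl R := by
    rw [Finset.disjoint_left]
    intro x hx hxR
    have h1 := (hClmem x hx).2
    simp only [hR, Finset.mem_insert, Finset.mem_singleton] at hxR
    rcases hxR with rfl | rfl
    · linarith
    · linarith
  have hinj : Function.Injective (fun j : ℕ => (j : ℝ) / N) := by
    intro a b h
    simp only at h
    field_simp at h
    exact_mod_cast h
  have hClcard : Cl.card = N := by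
    rw [hCl, Finset.card_image_of_injective _ hinj, Finset.card_range]
  have hRcard : R.card = 2 := by
    rw [hR, Finset.card_insert_of_notMem (by simp; linarith), Finset.card_singleton]
  have hTcard : T.card = N + 2 := by
    rw [hT, Finset.card_union_of_disjoint hdisj, hClcard, hRcard]
  have hNnat : 1 ≤ N := by
    by_contra h
    push_neg at h
    interval_cases N
    · simp at hN0
  have h0Cl : (0 : ℝ) ∈ Cl := by
    simp only [hCl, Finset.mem_image, Finset.mem_range]
    exact ⟨0, hNnat, by simp⟩
  have h0T : (0 : ℝ) ∈ T := Finset.mem_union_left _ h0Cl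
  -- infDist to S is |x|
  have hdS : ∀ x : ℝ, infDist x (S : Set ℝ) = |x| := by
    intro x
    rw [hS]
    simp [Metric.infDist_singleton, Real.dist_eq]
  have hBnn : (0 : ℝ) ≤ (B : ℝ) := by linarith
  -- ** bound dMJ p S T ≤ 1 **
  have hsumST : ∑ t ∈ T, infDist t (S : Set ℝ) ^ p ≤ 2 * (N + 2) := by
    rw [hT, Finset.sum_union hdisj]
    have h1 : ∑ t ∈ Cl, infDist t (S : Set ℝ) ^ p ≤ N := by
      calc ∑ t ∈ Cl, infDist t (S : Set ℝ) ^ p ≤ ∑ t ∈ Cl, 1 := by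
            apply Finset.sum_le_sum
            intro x hx
            rw [hdS]
            apply Real.rpow_le_one (abs_nonneg x) _ hp.le
            rw [abs_of_nonneg (hClmem x hx).1]
            exact (hClmem x hx).2.le
        _ = N := by rw [Finset.sum_const, hClcard]; simp
    have h2 : ∑ t ∈ R, infDist t (S : Set ℝ) ^ p ≤ 1 + (B : ℝ) ^ p := by
      rw [hR, Finset.sum_insert (by simp; linarith), Finset.sum_singleton, hdS, hdS,
        abs_of_nonneg hBnn, abs_one, Real.one_rpow]
    have := add_le_add h1 h2
    calc ∑ t ∈ Cl, infDist t (S : Set ℝ) ^ p + ∑ t ∈ R, infDist t (S : Set ℝ) ^ p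
        ≤ (N : ℝ) + (1 + (B : ℝ) ^ p) := this
      _ ≤ 2 * (N + 2) := by nlinarith [hN]
  have hST1 : dMJ p S T ≤ 1 := by
    rw [dMJ]
    have hzero : ∑ s ∈ S, infDist s (T : Set ℝ) ^ p = 0 := by
      rw [hS, Finset.sum_singleton, Metric.infDist_zero_of_mem (by exact_mod_cast h0T),
        Real.zero_rpow hp']
    rw [hzero, hTcard]
    have hinner : (∑ t ∈ T, infDist t (S : Set ℝ) ^ p) / (2 * ((N + 2 : ℕ) : ℝ)) + 0 / (2 * (S.card : ℝ)) ≤ 1 := by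
      rw [zero_div, add_zero, div_le_one (by positivity)]
      push_cast
      exact hsumST
    have hinn0 : 0 ≤ (∑ t ∈ T, infDist t (S : Set ℝ) ^ p) / (2 * ((N + 2 : ℕ) : ℝ)) + 0 / (2 * (S.card : ℝ)) := by
      rw [zero_div, add_zero]
      exact div_nonneg (hnn T _) (by positivity)
    calc ((∑ t ∈ T, infDist t (S : Set ℝ) ^ p) / (2 * ((N + 2 : ℕ) : ℝ)) + 0 / (2 * (S.card : ℝ))) ^ (1/p)
        ≤ (1 : ℝ) ^ (1/p) := Real.rpow_le_rpow hinn0 hinner h1p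
      _ = 1 := Real.one_rpow _
  have hST0 : 0 ≤ dMJ p S T := by
    rw [dMJ]
    apply Real.rpow_nonneg
    have h1 := hnn T (S : Set ℝ)
    have h2 := hnn S (T : Set ℝ)
    have : (0:ℝ) ≤ 2 * (T.card : ℝ) := by positivity
    have : (0:ℝ) ≤ 2 * (S.card : ℝ) := by positivity
    positivity
  -- ** bound dMJ p T R ≤ 2 **
  have hTR2 : dMJ p T R ≤ 2 := by
    rw [dMJ]
    have hzero : ∑ s ∈ T, infDist s (R : Set ℝ) ^ p ≤ (T.card : ℝ) * 2 ^ p := by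
      calc ∑ s ∈ T, infDist s (R : Set ℝ) ^ p ≤ ∑ s ∈ T, (2 : ℝ) ^ p := by
            apply Finset.sum_le_sum
            intro x hx
            apply Real.rpow_le_rpow Metric.infDist_nonneg _ hp.le
            rw [hT, Finset.mem_union] at hx
            rcases hx with hx | hx
            · have h1R : (1 : ℝ) ∈ (R : Set ℝ) := by simp [hR]
              calc infDist x (R : Set ℝ) ≤ dist x 1 := Metric.infDist_le_dist_of_mem h1R
                _ ≤ 2 := by
                    rw [Real.dist_eq, abs_le]
                    have := hClmem x hx
                    constructor <;> linarith [this.1, this.2]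
            · rw [Metric.infDist_zero_of_mem (by exact_mod_cast hx)]
              norm_num
        _ = (T.card : ℝ) * 2 ^ p := by rw [Finset.sum_const]; simp [mul_comm]
    have hRzero : ∑ t ∈ R, infDist t (T : Set ℝ) ^ p = 0 := by
      apply Finset.sum_eq_zero
      intro x hx
      rw [Metric.infDist_zero_of_mem, Real.zero_rpow hp']
      exact_mod_cast Finset.mem_union_right Cl hx
    rw [hRzero]
    have hTcard0 : (0 : ℝ) < (T.card : ℝ) := by rw [hTcard]; positivity
    have h2p0 : (0:ℝ) < (2:ℝ) ^ p := Real.rpow_pos_of_pos (by norm_num) p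
    have hinner : (0 : ℝ) / (2 * (R.card : ℝ)) + (∑ s ∈ T, infDist s (R : Set ℝ) ^ p) / (2 * (T.card : ℝ)) ≤ 2 ^ p := by
      rw [zero_div, zero_add, div_le_iff₀ (by positivity)]
      calc ∑ s ∈ T, infDist s (R : Set ℝ) ^ p ≤ (T.card : ℝ) * 2 ^ p := hzero
        _ ≤ 2 ^ p * (2 * (T.card : ℝ)) := by nlinarith
    have hinn0 : (0:ℝ) ≤ (0 : ℝ) / (2 * (R.card : ℝ)) + (∑ s ∈ T, infDist s (R : Set ℝ) ^ p) / (2 * (T.card : ℝ)) := by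
      rw [zero_div, zero_add]
      exact div_nonneg (hnn T _) (by positivity)
    calc ((0 : ℝ) / (2 * (R.card : ℝ)) + (∑ s ∈ T, infDist s (R : Set ℝ) ^ p) / (2 * (T.card : ℝ))) ^ (1/p)
        ≤ ((2 : ℝ) ^ p) ^ (1/p) := Real.rpow_le_rpow hinn0 hinner h1p
      _ = 2 := by
          rw [← Real.rpow_mul (by norm_num), mul_one_div, div_self hp', Real.rpow_one]
  have hTR0 : 0 ≤ dMJ p T R := by
    rw [dMJ]
    apply Real.rpow_nonneg
    have h1 := hnn R (T : Set ℝ)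
    have h2 := hnn T (R : Set ℝ)
    have : (0:ℝ) ≤ 2 * (T.card : ℝ) := by positivity
    have : (0:ℝ) ≤ 2 * (R.card : ℝ) := by positivity
    positivity
  -- ** lower bound dMJ p S R **
  have hSR : (B : ℝ) / (4 : ℝ) ^ (1 / p) ≤ dMJ p S R := by
    rw [dMJ]
    have hsum : (B : ℝ) ^ p ≤ ∑ t ∈ R, infDist t (S : Set ℝ) ^ p := by
      rw [hR, Finset.sum_insert (by simp; linarith), Finset.sum_singleton, hdS, hdS,
        abs_of_nonneg hBnn, abs_one, Real.one_rpow]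
      linarith
    have hlow : (B : ℝ) ^ p / 4 ≤ (∑ t ∈ R, infDist t (S : Set ℝ) ^ p) / (2 * (R.card : ℝ))
        + (∑ s ∈ S, infDist s (R : Set ℝ) ^ p) / (2 * (S.card : ℝ)) := by
      have hS2 : (0:ℝ) ≤ (∑ s ∈ S, infDist s (R : Set ℝ) ^ p) / (2 * (S.card : ℝ)) := by
        exact div_nonneg (hnn S _) (by positivity)
      rw [hRcard]
      push_cast
      have h4 : (B : ℝ) ^ p / 4 ≤ (∑ t ∈ R, infDist t (S : Set ℝ) ^ p) / (2 * 2) := by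
        rw [show (2:ℝ) * 2 = 4 by norm_num]
        gcongr
      linarith
    calc (B : ℝ) / (4 : ℝ) ^ (1/p) = ((B : ℝ) ^ p / 4) ^ (1/p) := by
          rw [Real.div_rpow (by positivity) (by norm_num), ← Real.rpow_mul hBnn,
            mul_one_div, div_self hp', Real.rpow_one]
      _ ≤ _ := Real.rpow_le_rpow (by positivity) hlow h1p
  -- ** conclude **
  refine ⟨S, T, R, ⟨0, by simp [hS]⟩, ⟨0, h0T⟩, ⟨1, by simp [hR]⟩, ?_⟩
  have h4p : (0 : ℝ) < (4 : ℝ) ^ (1 / p) := Real.rpow_pos_of_pos (by norm_num) _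
  have hfin : k * (dMJ p S T + dMJ p T R) ≤ 3 * k := by nlinarith
  have h3k : 3 * k < (B : ℝ) / (4 : ℝ) ^ (1 / p) := by
    rw [lt_div_iff₀ h4p]
    linarith [hB3k]
  calc k * (dMJ p S T + dMJ p T R) ≤ 3 * k := hfin
    _ < (B : ℝ) / (4 : ℝ) ^ (1/p) := h3k
    _ ≤ dMJ p S R := hSR
end
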